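/- Let f(u) = (u^2-1)^2 and θ(z) = tanh(√2 z). For any continuous bounded Θ : ℝ → ℝ with ∫_{-∞}^{∞} Θ(z) θ'(z) dz = 0 and |Θ(z)| ≤ Ce^{-ν|z|}, the function u₁(z) = θ'(z) ∫_0^z (θ'(ς))^{-2} ∫_ς^{∞} Θ(τ) θ'(τ) dτ dς is well-defined, bounded on ℝ, and solves -u₁'' + f''(θ) u₁ = Θ. -/

import Mathlib

open Real MeasureTheory Set

lemma aux_intOn_Ici (b c : ℝ) (hb : 0 < b) :
    IntegrableOn (fun x : ℝ => Real.exp (-(b * x))) (Set.Ici c) := by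
  rw [integrableOn_Ici_iff_integrableOn_Ioi]
  simpa [neg_mul] using exp_neg_integrableOn_Ioi c hb

lemma aux_int_Ici (b c : ℝ) (hb : 0 < b) :
    ∫ x in Set.Ici c, Real.exp (-(b * x)) = Real.exp (-(b * c)) / b := by
  rw [MeasureTheory.integral_Ici_eq_integral_Ioi,
    integral_comp_mul_left_Ioi (fun x => Real.exp (-x)) c hb,
    integral_exp_neg_Ioi, smul_eq_mul]
  ring

lemma aux_intOn_Iic (b c : ℝ) (hb : 0 < b) :
    IntegrableOn (fun x : ℝ => Real.exp (b * x)) (Set.Iic c) := by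
  have A : MeasurableEmbedding (fun x : ℝ => -x) :=
    (Homeomorph.neg ℝ).isClosedEmbedding.measurableEmbedding
  have h := A.integrableOn_map_iff (f := fun x : ℝ => Real.exp (b * x))
    (μ := volume) (s := Set.Iic c)
  rw [Measure.map_neg_eq_self (volume : Measure ℝ)] at h
  rw [h, show (fun x : ℝ => -x) ⁻¹' (Set.Iic c) = Set.Ici (-c) by
    ext x; simp [neg_le]]
  simpa [Function.comp_def, mul_neg] using aux_intOn_Ici b (-c) hb

lemma aux_int_Iic (b c : ℝ) (hb : 0 < b) :
    ∫ x in Set.Iic c, Real.exp (b * x) = Real.exp (b * c) / b := by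
  have h := integral_comp_neg_Ioi (-c) (fun x => Real.exp (b * x))
  simp only [neg_neg, mul_neg] at h
  rw [← h, ← MeasureTheory.integral_Ici_eq_integral_Ioi]
  rw [show (∫ x in Set.Ici (-c), Real.exp (-(b * x))) = Real.exp (-(b * -c)) / b from
    aux_int_Ici b (-c) hb]
  ring_nf

lemma aux_int_exp (b z0 z1 : ℝ) (hb : b ≠ 0) :
    ∫ x in z0..z1, Real.exp (b * x) = (Real.exp (b * z1) - Real.exp (b * z0)) / b := by
  have hd : ∀ x ∈ Set.uIcc z0 z1, HasDerivAt (fun x => Real.exp (b * x) / b)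
      (Real.exp (b * x)) x := by
    intro x _
    have h := (((hasDerivAt_id x).const_mul b).exp).div_const b
    simpa [mul_comm, hb, mul_div_assoc, mul_div_cancel_right₀] using h
  rw [intervalIntegral.integral_eq_sub_of_hasDerivAt hd
    ((Real.continuous_exp.comp (continuous_const.mul continuous_id)).intervalIntegrable _ _)]
  ring

lemma aux_tanh_hasDerivAt (x : ℝ) : HasDerivAt Real.tanh (1 - Real.tanh x ^ 2) x := by
  have hc : Real.cosh x ≠ 0 := (Real.cosh_pos x).ne'
  have h := (Real.hasDerivAt_sinh x).div (Real.hasDerivAt_cosh x) hc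
  have e : Real.tanh = fun y => Real.sinh y / Real.cosh y :=
    funext fun y => Real.tanh_eq_sinh_div_cosh y
  rw [e]
  refine h.congr_deriv ?_
  simp only []
  field_simp

theorem stmt_12 (f : ℝ → ℝ) (hf : ∀ u, f u = (u ^ 2 - 1) ^ 2)
    (θ : ℝ → ℝ) (hθ : ∀ z, θ z = Real.tanh (Real.sqrt 2 * z))
    (Θ : ℝ → ℝ) (hc : Continuous Θ)
    (C ν : ℝ) (hC : 0 < C) (hν : 0 < ν)
    (hdecay : ∀ z, |Θ z| ≤ C * Real.exp (-ν * |z|))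
    (horth : (∫ z : ℝ, Θ z * deriv θ z) = 0)
    (u₁ : ℝ → ℝ)
    (hu : ∀ z, u₁ z = deriv θ z *
      ∫ ς in (0 : ℝ)..z, ((deriv θ ς) ^ 2)⁻¹ * ∫ τ in Set.Ici ς, Θ τ * deriv θ τ) :
    (∃ M : ℝ, ∀ z, |u₁ z| ≤ M) ∧
    (∀ z, -(deriv (deriv u₁) z) + deriv (deriv f) (θ z) * u₁ z = Θ z) := by
  -- basic constants
  set a : ℝ := Real.sqrt 2 with ha_def
  have ha : 0 < a := Real.sqrt_pos.2 (by norm_num)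
  have ha2 : a ^ 2 = 2 := Real.sq_sqrt (by norm_num)
  set t : ℝ → ℝ := fun z => Real.tanh (a * z) with ht_def
  set D : ℝ → ℝ := fun z => a * (1 - t z ^ 2) with hD_def
  set D1 : ℝ → ℝ := fun z => -(2 * a ^ 2) * (t z * (1 - t z ^ 2)) with hD1_def
  -- derivatives of t, D, D1
  have ht' : ∀ z, HasDerivAt t (D z) z := by
    intro z
    have h1 : HasDerivAt (fun z : ℝ => a * z) a z := by
      simpa using (hasDerivAt_id z).const_mul a
    have h2 := (aux_tanh_hasDerivAt (a * z)).comp z h1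
    show HasDerivAt (fun y => Real.tanh (a * y)) (a * (1 - Real.tanh (a * z) ^ 2)) z
    simpa [Function.comp_def, mul_comm] using h2
  have hθeq : θ = t := funext fun z => by rw [hθ z]
  have hdθ : deriv θ = D := by
    funext z; rw [hθeq]; exact (ht' z).deriv
  have hD' : ∀ z, HasDerivAt D (D1 z) z := by
    intro z
    have h := ((ht' z).pow 2).const_sub 1 |>.const_mul a
    refine h.congr_deriv ?_
    simp [hD_def, hD1_def]
    ring
  have hD1' : ∀ z, HasDerivAt D1 ((12 * t z ^ 2 - 4) * D z) z := by
    intro z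
    have h := ((ht' z).mul (((ht' z).pow 2).const_sub 1)).const_mul (-(2 * a ^ 2))
    refine h.congr_deriv ?_
    simp only [hD_def, hD1_def, pow_one, Pi.pow_apply]
    rw [show a ^ 2 = 2 from ha2]
    ring
  have hDc : Continuous D := continuous_iff_continuousAt.2 fun z => (hD' z).continuousAt
  -- second derivative of f
  have hf2 : deriv (deriv f) = fun u : ℝ => 12 * u ^ 2 - 4 := by
    have hfe : f = fun u : ℝ => (u ^ 2 - 1) ^ 2 := funext hf
    have h1 : deriv f = fun u : ℝ => 4 * u ^ 3 - 4 * u := by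
      funext u
      have h : HasDerivAt f (4 * u ^ 3 - 4 * u) u := by
        rw [hfe]
        have := ((hasDerivAt_pow 2 u).sub_const 1).pow 2
        refine this.congr_deriv ?_
        ring
      exact h.deriv
    rw [h1]
    funext u
    have h : HasDerivAt (fun u : ℝ => 4 * u ^ 3 - 4 * u) (12 * u ^ 2 - 4) u := by
      have := ((hasDerivAt_pow 3 u).const_mul 4).sub ((hasDerivAt_id u).const_mul 4)
      refine this.congr_deriv ?_
      ring
    exact h.deriv
  -- bounds on D via cosh
  have hDcosh : ∀ z, D z = a / Real.cosh (a * z) ^ 2 := by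
    intro z
    show a * (1 - Real.tanh (a*z) ^ 2) = a / Real.cosh (a*z) ^ 2
    rw [Real.tanh_eq_sinh_div_cosh]
    have hcn : Real.cosh (a*z) ≠ 0 := (Real.cosh_pos _).ne'
    field_simp
    exact Real.cosh_sq_sub_sinh_sq _
  have hcosh_le : ∀ y : ℝ, Real.cosh y ≤ Real.exp |y| := by
    intro y
    rw [Real.cosh_eq]
    have h1 : Real.exp y ≤ Real.exp |y| := Real.exp_le_exp.2 (le_abs_self y)
    have h2 : Real.exp (-y) ≤ Real.exp |y| := Real.exp_le_exp.2 (neg_le_abs y)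
    linarith
  have hcosh_ge : ∀ y : ℝ, Real.exp |y| / 2 ≤ Real.cosh y := by
    intro y
    rw [Real.cosh_eq]
    rcases abs_cases y with ⟨h, _⟩ | ⟨h, _⟩
    · rw [h]
      have := (Real.exp_pos (-y)).le
      linarith
    · rw [h]
      have := (Real.exp_pos y).le
      linarith
  have habs : ∀ z : ℝ, |a * z| = a * |z| := fun z => by
    rw [abs_mul, abs_of_pos ha]
  have hDpos : ∀ z, 0 < D z := by
    intro z; rw [hDcosh]; positivity
  have hexpsq : ∀ y : ℝ, Real.exp y ^ 2 = Real.exp (2 * y) := by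
    intro y
    rw [two_mul, Real.exp_add]; ring
  have hDub : ∀ z, D z ≤ 4 * a * Real.exp (-(2 * a * |z|)) := by
    intro z
    rw [hDcosh]
    have key : Real.exp (a * |z|) / 2 ≤ Real.cosh (a * z) := by
      have := hcosh_ge (a * z); rwa [habs] at this
    have h2 : (Real.exp (a * |z|) / 2) ^ 2 ≤ Real.cosh (a * z) ^ 2 :=
      pow_le_pow_left₀ (by positivity) key 2
    calc a / Real.cosh (a*z) ^ 2 ≤ a / (Real.exp (a * |z|) / 2) ^ 2 :=
          div_le_div_of_nonneg_left ha.le (by positivity) h2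
      _ = 4 * a * Real.exp (-(2 * a * |z|)) := by
          rw [div_pow, hexpsq, Real.exp_neg]
          have h := Real.exp_ne_zero (2 * (a * |z|))
          rw [eq_comm, mul_comm (2:ℝ) (a * |z|), show a * |z| * 2 = 2 * a * |z| by ring]
          field_simp
          ring
  have hDlb : ∀ z, a * Real.exp (-(2 * a * |z|)) ≤ D z := by
    intro z
    rw [hDcosh]
    have key : Real.cosh (a * z) ≤ Real.exp (a * |z|) := by
      have := hcosh_le (a * z); rwa [habs] at this
    have h2 : Real.cosh (a * z) ^ 2 ≤ Real.exp (a * |z|) ^ 2 :=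
      pow_le_pow_left₀ (Real.cosh_pos _).le key 2
    calc a * Real.exp (-(2 * a * |z|)) = a / Real.exp (a * |z|) ^ 2 := by
          rw [hexpsq, Real.exp_neg, show (2:ℝ) * (a * |z|) = 2 * a * |z| by ring]
          field_simp
      _ ≤ a / Real.cosh (a*z) ^ 2 :=
          div_le_div_of_nonneg_left ha.le (by positivity) h2
  -- rewrite hypotheses
  rw [hdθ] at horth hu
  set b : ℝ := ν + 2 * a with hb_def
  have hb : 0 < b := by positivity
  set K : ℝ := 4 * a * C / b with hK_def
  have hK : 0 < K := by positivity
  set φ : ℝ → ℝ := fun τ => Θ τ * D τ with hφ_def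
  have hφc : Continuous φ := hc.mul hDc
  have hφbd : ∀ τ, |φ τ| ≤ 4 * a * C * Real.exp (-(b * |τ|)) := by
    intro τ
    have h1 : |φ τ| = |Θ τ| * D τ := by
      rw [abs_mul, abs_of_pos (hDpos τ)]
    rw [h1]
    have h2 := hdecay τ
    have h3 := hDub τ
    calc |Θ τ| * D τ ≤ (C * Real.exp (-ν * |τ|)) * (4 * a * Real.exp (-(2 * a * |τ|))) := by
          apply mul_le_mul h2 h3 (hDpos τ).le (by positivity)
      _ = 4 * a * C * Real.exp (-(b * |τ|)) := by
          rw [hb_def, show -((ν + 2*a) * |τ|) = -ν * |τ| + -(2 * a * |τ|) by ring,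
            Real.exp_add]
          ring
  have hφint : Integrable φ := by
    have hgint : Integrable (fun τ : ℝ => 4 * a * C * Real.exp (-(b * |τ|))) := by
      have h1 : IntegrableOn (fun τ : ℝ => Real.exp (-(b * |τ|))) (Set.Iic 0) := by
        apply (aux_intOn_Iic b 0 hb).congr_fun _ measurableSet_Iic
        intro x hx
        simp only [Set.mem_Iic] at hx
        show Real.exp (b * x) = Real.exp (-(b * |x|))
        rw [abs_of_nonpos hx]
        ring_nf
      have h2 : IntegrableOn (fun τ : ℝ => Real.exp (-(b * |τ|))) (Set.Ici 0) := by
        apply (aux_intOn_Ici b 0 hb).congr_fun _ measurableSet_Ici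
        intro x hx
        simp only [Set.mem_Ici] at hx
        show Real.exp (-(b * x)) = Real.exp (-(b * |x|))
        rw [abs_of_nonneg hx]
      have h3 : IntegrableOn (fun τ : ℝ => Real.exp (-(b * |τ|))) (Set.Iic 0 ∪ Set.Ici 0) :=
        h1.union h2
      rw [Set.Iic_union_Ici, integrableOn_univ] at h3
      exact h3.const_mul _
    apply hgint.mono' (hφc.aestronglyMeasurable)
    filter_upwards with τ
    rw [Real.norm_eq_abs]
    exact hφbd τ
  -- the tail integral g
  set g : ℝ → ℝ := fun ς => ∫ τ in Set.Ici ς, φ τ with hg_def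
  have hgIic : ∀ ς, g ς = - ∫ τ in Set.Iic ς, φ τ := by
    intro ς
    have h1 := intervalIntegral.integral_Iic_add_Ioi (b := ς)
      hφint.integrableOn hφint.integrableOn
    rw [horth] at h1
    show (∫ τ in Set.Ici ς, φ τ) = - ∫ τ in Set.Iic ς, φ τ
    rw [MeasureTheory.integral_Ici_eq_integral_Ioi]
    linarith
  have hgrep : ∀ ς, g ς = g 0 - ∫ τ in (0:ℝ)..ς, φ τ := by
    intro ς
    have h1 := intervalIntegral.integral_Iic_sub_Iic (μ := volume) (f := φ)
      hφint.integrableOn hφint.integrableOn (a := 0) (b := ς)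
    rw [hgIic ς, hgIic 0]
    linarith
  have hg' : ∀ ς, HasDerivAt g (-(φ ς)) ς := by
    intro ς
    have h1 : HasDerivAt (fun u => ∫ τ in (0:ℝ)..u, φ τ) (φ ς) ς :=
      intervalIntegral.integral_hasDerivAt_right
        (hφc.intervalIntegrable 0 ς)
        (hφc.stronglyMeasurable.stronglyMeasurableAtFilter)
        hφc.continuousAt
    have h2 := (hasDerivAt_const ς (g 0)).sub h1
    have h3 : g = fun u => g 0 - ∫ τ in (0:ℝ)..u, φ τ := funext hgrep
    rw [h3]
    exact h2.congr_deriv (zero_sub _)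
  have hgb : ∀ ς, |g ς| ≤ K * Real.exp (-(b * |ς|)) := by
    intro ς
    rcases le_total 0 ς with hς | hς
    · rw [abs_of_nonneg hς]
      have h1 : |g ς| ≤ ∫ τ in Set.Ici ς, |φ τ| := by
        rw [hg_def]
        exact (norm_integral_le_integral_norm φ).trans_eq (by simp [Real.norm_eq_abs])
      have h2 : (∫ τ in Set.Ici ς, |φ τ|) ≤ ∫ τ in Set.Ici ς, 4 * a * C * Real.exp (-(b * τ)) := by
        apply setIntegral_mono_on (hφint.abs.integrableOn)
          ((aux_intOn_Ici b ς hb).const_mul _) measurableSet_Ici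
        intro τ hτ
        simp only [Set.mem_Ici] at hτ
        have h3 := hφbd τ
        have h4 : Real.exp (-(b * |τ|)) ≤ Real.exp (-(b * τ)) := by
          apply Real.exp_le_exp.2
          have := le_abs_self τ
          nlinarith
        calc |φ τ| ≤ 4 * a * C * Real.exp (-(b * |τ|)) := h3
          _ ≤ 4 * a * C * Real.exp (-(b * τ)) := by
              apply mul_le_mul_of_nonneg_left h4 (by positivity)
      have h5 : (∫ τ in Set.Ici ς, 4 * a * C * Real.exp (-(b * τ)))
          = K * Real.exp (-(b * ς)) := by
        rw [MeasureTheory.integral_const_mul, aux_int_Ici b ς hb, hK_def]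
        ring
      linarith
    · rw [abs_of_nonpos hς]
      have h1 : |g ς| ≤ ∫ τ in Set.Iic ς, |φ τ| := by
        rw [hgIic ς, abs_neg]
        exact (norm_integral_le_integral_norm φ).trans_eq (by simp [Real.norm_eq_abs])
      have h2 : (∫ τ in Set.Iic ς, |φ τ|) ≤ ∫ τ in Set.Iic ς, 4 * a * C * Real.exp (b * τ) := by
        apply setIntegral_mono_on (hφint.abs.integrableOn)
          ((aux_intOn_Iic b ς hb).const_mul _) measurableSet_Iic
        intro τ hτ
        simp only [Set.mem_Iic] at hτ
        have h3 := hφbd τ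
        have h4 : Real.exp (-(b * |τ|)) ≤ Real.exp (b * τ) := by
          apply Real.exp_le_exp.2
          have := neg_abs_le τ
          nlinarith
        calc |φ τ| ≤ 4 * a * C * Real.exp (-(b * |τ|)) := h3
          _ ≤ 4 * a * C * Real.exp (b * τ) := by
              apply mul_le_mul_of_nonneg_left h4 (by positivity)
      have h5 : (∫ τ in Set.Iic ς, 4 * a * C * Real.exp (b * τ))
          = K * Real.exp (b * ς) := by
        rw [MeasureTheory.integral_const_mul, aux_int_Iic b ς hb, hK_def]
        ring
      have h6 : -(b * -ς) = b * ς := by ring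
      rw [h6]
      linarith
  -- H and G
  set H : ℝ → ℝ := fun ς => ((D ς) ^ 2)⁻¹ * g ς with hH_def
  have hH' : ∀ ς, HasDerivAt H
      (-(2 * D ς ^ 1 * D1 ς) / ((D ς ^ 2) ^ 2) * g ς + (D ς ^ 2)⁻¹ * -(φ ς)) ς := by
    intro ς
    exact (((hD' ς).pow 2).inv (pow_ne_zero 2 (hDpos ς).ne')).mul (hg' ς)
  have hHc : Continuous H := continuous_iff_continuousAt.2 fun ς => (hH' ς).continuousAt
  have hHb : ∀ ς, |H ς| ≤ K / a ^ 2 * Real.exp (2 * a * |ς|) := by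
    intro ς
    have h0 : 0 < D ς ^ 2 := pow_pos (hDpos ς) 2
    have h1 : (a * Real.exp (-(2 * a * |ς|))) ^ 2 ≤ D ς ^ 2 :=
      pow_le_pow_left₀ (by positivity) (hDlb ς) 2
    have h2 : (D ς ^ 2)⁻¹ ≤ ((a * Real.exp (-(2 * a * |ς|))) ^ 2)⁻¹ := by
      apply inv_anti₀ (by positivity) h1
    have h3 : |H ς| = (D ς ^ 2)⁻¹ * |g ς| := by
      rw [hH_def]
      show |(D ς ^ 2)⁻¹ * g ς| = (D ς ^ 2)⁻¹ * |g ς|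
      rw [abs_mul, abs_of_pos (inv_pos.2 h0)]
    rw [h3]
    calc (D ς ^ 2)⁻¹ * |g ς|
        ≤ ((a * Real.exp (-(2 * a * |ς|))) ^ 2)⁻¹ * (K * Real.exp (-(b * |ς|))) := by
          apply mul_le_mul h2 (hgb ς) (abs_nonneg _) (by positivity)
      _ = K / a ^ 2 * Real.exp ((2 * a - ν) * |ς|) := by
          have hx : Real.exp (4*a*|ς|) * Real.exp (-(b*|ς|)) = Real.exp ((2*a-ν)*|ς|) := by
            rw [← Real.exp_add]
            congr 1
            rw [hb_def]; ring
          rw [mul_pow, hexpsq, show (2:ℝ) * -(2 * a * |ς|) = -(4 * a * |ς|) by ring,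
            Real.exp_neg (4*a*|ς|), mul_inv, inv_inv, ← hx, div_eq_mul_inv]
          ring
      _ ≤ K / a ^ 2 * Real.exp (2 * a * |ς|) := by
          apply mul_le_mul_of_nonneg_left _ (by positivity)
          apply Real.exp_le_exp.2
          nlinarith [abs_nonneg ς, hν.le]
  set G : ℝ → ℝ := fun z => ∫ ς in (0:ℝ)..z, H ς with hG_def
  have hG' : ∀ z, HasDerivAt G (H z) z := by
    intro z
    exact intervalIntegral.integral_hasDerivAt_right
      (hHc.intervalIntegrable 0 z)
      (hHc.stronglyMeasurable.stronglyMeasurableAtFilter)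
      hHc.continuousAt
  have hGb : ∀ z, |G z| ≤ K / a ^ 2 * Real.exp (2 * a * |z|) / (2 * a) := by
    intro z
    rcases le_total 0 z with hz | hz
    · rw [abs_of_nonneg hz]
      have h1 : |G z| ≤ ∫ ς in (0:ℝ)..z, |H ς| := by
        rw [hG_def]
        exact intervalIntegral.abs_integral_le_integral_abs hz
      have h2 : (∫ ς in (0:ℝ)..z, |H ς|)
          ≤ ∫ ς in (0:ℝ)..z, K / a ^ 2 * Real.exp (2 * a * ς) := by
        apply intervalIntegral.integral_mono_on hz
          (hHc.abs.intervalIntegrable 0 z)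
          ((by fun_prop : Continuous fun ς : ℝ => K / a ^ 2 * Real.exp (2 * a * ς)).intervalIntegrable 0 z)
        intro ς hς
        have hς0 : 0 ≤ ς := hς.1
        have := hHb ς
        rwa [abs_of_nonneg hς0] at this
      have h3 : (∫ ς in (0:ℝ)..z, K / a ^ 2 * Real.exp (2 * a * ς))
          = K / a ^ 2 * ((Real.exp (2 * a * z) - 1) / (2 * a)) := by
        rw [intervalIntegral.integral_const_mul, aux_int_exp (2*a) 0 z (by positivity)]
        norm_num
      have h4 : K / a ^ 2 * ((Real.exp (2 * a * z) - 1) / (2 * a))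
          ≤ K / a ^ 2 * Real.exp (2 * a * z) / (2 * a) := by
        rw [mul_div_assoc]
        apply mul_le_mul_of_nonneg_left _ (by positivity)
        gcongr
        linarith
      linarith
    · rw [abs_of_nonpos hz]
      have hsym : G z = - ∫ ς in z..(0:ℝ), H ς := by
        rw [hG_def]
        exact intervalIntegral.integral_symm z 0
      have h1 : |G z| ≤ ∫ ς in z..(0:ℝ), |H ς| := by
        rw [hsym, abs_neg]
        exact intervalIntegral.abs_integral_le_integral_abs hz
      have h2 : (∫ ς in z..(0:ℝ), |H ς|)
          ≤ ∫ ς in z..(0:ℝ), K / a ^ 2 * Real.exp (-(2 * a) * ς) := by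
        apply intervalIntegral.integral_mono_on hz
          (hHc.abs.intervalIntegrable z 0)
          ((by fun_prop : Continuous fun ς : ℝ => K / a ^ 2 * Real.exp (-(2 * a) * ς)).intervalIntegrable z 0)
        intro ς hς
        have hς0 : ς ≤ 0 := hς.2
        have h := hHb ς
        rw [abs_of_nonpos hς0] at h
        calc |H ς| ≤ K / a ^ 2 * Real.exp (2 * a * -ς) := h
          _ = K / a ^ 2 * Real.exp (-(2 * a) * ς) := by ring_nf
      have h3 : (∫ ς in z..(0:ℝ), K / a ^ 2 * Real.exp (-(2 * a) * ς))
          = K / a ^ 2 * ((Real.exp (2 * a * -z) - 1) / (2 * a)) := by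
        rw [intervalIntegral.integral_const_mul,
          aux_int_exp (-(2*a)) z 0 (by nlinarith)]
        rw [show -(2*a) * 0 = (0:ℝ) by ring, Real.exp_zero,
          show -(2*a) * z = 2 * a * -z by ring]
        ring
      have h4 : K / a ^ 2 * ((Real.exp (2 * a * -z) - 1) / (2 * a))
          ≤ K / a ^ 2 * Real.exp (2 * a * -z) / (2 * a) := by
        rw [mul_div_assoc]
        apply mul_le_mul_of_nonneg_left _ (by positivity)
        gcongr
        linarith
      linarith
  -- the function u₁ as D * G
  have hu1eq : u₁ = fun z => D z * G z := funext fun z => hu z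
  -- boundedness
  have hbound : ∃ M : ℝ, ∀ z, |u₁ z| ≤ M := by
    refine ⟨2 * K / a ^ 2, fun z => ?_⟩
    rw [hu1eq]
    show |D z * G z| ≤ 2 * K / a ^ 2
    rw [abs_mul, abs_of_pos (hDpos z)]
    calc D z * |G z|
        ≤ (4 * a * Real.exp (-(2 * a * |z|))) *
          (K / a ^ 2 * Real.exp (2 * a * |z|) / (2 * a)) := by
          apply mul_le_mul (hDub z) (hGb z) (abs_nonneg _) (by positivity)
      _ = 2 * K / a ^ 2 := by
          rw [Real.exp_neg]
          have h := Real.exp_ne_zero (2 * a * |z|)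
          field_simp
          ring
  refine ⟨hbound, ?_⟩
  -- the ODE
  intro z
  have hder1 : ∀ x, HasDerivAt u₁ (D1 x * G x + D x * H x) x := by
    intro x
    rw [hu1eq]
    exact (hD' x).mul (hG' x)
  have hderiv1 : deriv u₁ = fun x => D1 x * G x + D x * H x :=
    funext fun x => (hder1 x).deriv
  have hder2 : HasDerivAt (deriv u₁)
      (((12 * t z ^ 2 - 4) * D z * G z + D1 z * H z) +
        (D1 z * H z + D z * (-(2 * D z ^ 1 * D1 z) / ((D z ^ 2) ^ 2) * g z
          + (D z ^ 2)⁻¹ * -(φ z)))) z := by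
    rw [hderiv1]
    exact ((hD1' z).mul (hG' z)).add ((hD' z).mul (hH' z))
  rw [hder2.deriv, hf2, hθeq, hu1eq]
  show -(((12 * t z ^ 2 - 4) * D z * G z + D1 z * H z) +
        (D1 z * H z + D z * (-(2 * D z ^ 1 * D1 z) / ((D z ^ 2) ^ 2) * g z
          + (D z ^ 2)⁻¹ * -(φ z)))) + (12 * t z ^ 2 - 4) * (D z * G z) = Θ z
  have hDz : D z ≠ 0 := (hDpos z).ne'
  have hHz : H z = (D z ^ 2)⁻¹ * g z := rfl
  have hφz : φ z = Θ z * D z := rfl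
  rw [hHz, hφz]
  field_simp
  ring
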